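/- Let k ≥ 2 and r ≥ 1 be integers and let Q_1, …, Q_r be pairwise disjoint sets in a real inner product space, each of size k. Then there exist a partition {P_1, …, P_k} of the union P = Q_1 ∪ ⋯ ∪ Q_r with |P_i ∩ Q_j| = 1 for all i ∈ {1,…,k} and j ∈ {1,…,r}, and a point c such that for every i the closed ball of radius ((1 + √2)/√r)·max_{j ∈ [r]} diam Q_j centered at c intersects the convex hull of P_i. -/

import Mathlib

open scoped RealInnerProductSpace in
private lemma tverberg_min_aux {E : Type*} [NormedAddCommGroup E] [InnerProductSpace ℝ E]
    (k r : ℕ) (hk : 0 < k) (f : Fin r → Fin k → E) (D : ℝ)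
    (hD : ∀ j i i', ‖f j i - f j i'‖ ≤ D) :
    ∃ σ : Fin r → Equiv.Perm (Fin k),
      ∀ ℓ, ‖∑ j, (f j ((σ j) ℓ) - (k:ℝ)⁻¹ • ∑ i, f j i)‖^2 ≤ (r:ℝ) * D^2 := by
  classical
  have hkR : (0:ℝ) < (k:ℝ) := by exact_mod_cast hk
  set b : Fin r → E := fun j => (k:ℝ)⁻¹ • ∑ i, f j i with hb
  set S : (Fin r → Equiv.Perm (Fin k)) → Fin k → E :=
    fun σ ℓ => ∑ j, (f j ((σ j) ℓ) - b j) with hS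
  obtain ⟨σ, hσ⟩ := Finite.exists_min (fun σ => ∑ ℓ, ‖S σ ℓ‖^2)
  refine ⟨σ, fun ℓ => ?_⟩
  show ‖S σ ℓ‖^2 ≤ (r:ℝ) * D^2
  set p : Fin k → Fin r → E := fun i j => f j ((σ j) i) with hp
  have hzero : ∀ j, ∑ i : Fin k, (f j ((σ j) i) - b j) = 0 := by
    intro j
    rw [Finset.sum_sub_distrib, Finset.sum_const, Finset.card_univ, Fintype.card_fin,
      Equiv.sum_comp (σ j) (f j), ← Nat.cast_smul_eq_nsmul ℝ, hb]
    simp only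
    rw [smul_inv_smul₀ (ne_of_gt hkR), sub_self]
  have hsum0 : ∑ i, S σ i = 0 := by
    rw [hS]; simp only
    rw [Finset.sum_comm]
    exact Finset.sum_eq_zero fun j _ => hzero j
  -- the swap inequality from minimality
  have hswap : ∀ i₁ i₂ j, ⟪S σ i₂ - S σ i₁, p i₂ j - p i₁ j⟫ ≤ ‖p i₂ j - p i₁ j‖^2 := by
    intro i₁ i₂ j
    rcases eq_or_ne i₁ i₂ with rfl | hne
    · simp
    set d : E := p i₂ j - p i₁ j with hd
    set τ : Fin r → Equiv.Perm (Fin k) :=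
      Function.update σ j ((Equiv.swap i₁ i₂).trans (σ j)) with hτ
    have hτj : τ j = (Equiv.swap i₁ i₂).trans (σ j) := Function.update_self _ _ _
    have hτne : ∀ j', j' ≠ j → τ j' = σ j' := fun j' h => Function.update_of_ne h _ _
    have hSτ : ∀ i, S τ i = S σ i + (f j ((τ j) i) - f j ((σ j) i)) := by
      intro i
      rw [hS]; simp only
      calc ∑ j', (f j' ((τ j') i) - b j')
          = ∑ j', ((f j' ((σ j') i) - b j')
              + if j' = j then f j ((τ j) i) - f j ((σ j) i) else 0) := by
            refine Finset.sum_congr rfl fun j' _ => ?_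
            by_cases h : j' = j
            · subst h; simp only [if_pos rfl]; exact (sub_add_sub_cancel' _ _ _).symm
            · rw [hτne j' h, if_neg h, add_zero]
        _ = (∑ j', (f j' ((σ j') i) - b j')) + (f j ((τ j) i) - f j ((σ j) i)) := by
            rw [Finset.sum_add_distrib, Finset.sum_ite_eq' Finset.univ j]
            simp
    have h1 : S τ i₁ = S σ i₁ + d := by
      rw [hSτ i₁, hτj, hd, hp]
      simp [Equiv.swap_apply_left]
    have h2 : S τ i₂ = S σ i₂ - d := by
      rw [hSτ i₂, hτj, hd, hp]
      simp only [Equiv.trans_apply, Equiv.swap_apply_right]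
      abel
    have h3 : ∀ i, i ≠ i₁ → i ≠ i₂ → S τ i = S σ i := by
      intro i ha hb'
      rw [hSτ i, hτj]
      simp [Equiv.swap_apply_of_ne_of_ne ha hb']
    have hmin := hσ τ
    have hsum : ∑ i, (‖S τ i‖^2 - ‖S σ i‖^2)
        = (‖S σ i₁ + d‖^2 - ‖S σ i₁‖^2) + (‖S σ i₂ - d‖^2 - ‖S σ i₂‖^2) := by
      rw [← Finset.sum_subset (Finset.subset_univ ({i₁, i₂} : Finset (Fin k)))
        (fun x _ hx => ?_)]
      · rw [Finset.sum_pair hne, h1, h2]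
      · simp only [Finset.mem_insert, Finset.mem_singleton, not_or] at hx
        rw [h3 x hx.1 hx.2, sub_self]
    have hF : 0 ≤ ∑ i, (‖S τ i‖^2 - ‖S σ i‖^2) := by
      rw [Finset.sum_sub_distrib]
      have := hσ τ
      linarith
    rw [hsum] at hF
    have e1 := norm_add_sq_real (S σ i₁) d
    have e2 := norm_sub_sq_real (S σ i₂) d
    rw [inner_sub_left]
    linarith
  -- the summation chain
  have hsj : ∀ i i', ∑ j', (p i j' - p i' j') = S σ i - S σ i' := by
    intro i i'
    rw [hS]; simp only
    rw [← Finset.sum_sub_distrib]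
    exact Finset.sum_congr rfl fun j' _ => by rw [hp]; abel
  have hA : (k:ℝ) * ‖S σ ℓ‖^2 = ∑ i, ∑ j', ⟪S σ ℓ, p ℓ j' - p i j'⟫ := by
    calc (k:ℝ) * ‖S σ ℓ‖^2 = ⟪S σ ℓ, (k:ℝ) • S σ ℓ⟫ := by
          rw [real_inner_smul_right, real_inner_self_eq_norm_sq]
      _ = ⟪S σ ℓ, ∑ i : Fin k, (S σ ℓ - S σ i)⟫ := by
          rw [Finset.sum_sub_distrib, Finset.sum_const, Finset.card_univ, Fintype.card_fin,
            hsum0, sub_zero, ← Nat.cast_smul_eq_nsmul ℝ]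
      _ = ∑ i : Fin k, ⟪S σ ℓ, S σ ℓ - S σ i⟫ := inner_sum _ _ _
      _ = ∑ i, ∑ j', ⟪S σ ℓ, p ℓ j' - p i j'⟫ := by
          refine Finset.sum_congr rfl fun i _ => ?_
          rw [← hsj ℓ i, inner_sum]
  have hterm : ∀ i j', ⟪S σ ℓ, p ℓ j' - p i j'⟫ ≤ D^2 - ⟪S σ i, p i j' - p ℓ j'⟫ := by
    intro i j'
    have h := hswap ℓ i j'
    have hd2 : ‖p i j' - p ℓ j'‖^2 ≤ D^2 :=
      pow_le_pow_left₀ (norm_nonneg _) (hD j' _ _) 2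
    have hneg : ⟪S σ ℓ, p ℓ j' - p i j'⟫ = -⟪S σ ℓ, p i j' - p ℓ j'⟫ := by
      rw [← inner_neg_right, neg_sub]
    rw [inner_sub_left] at h
    linarith
  have hmain : (k:ℝ) * ‖S σ ℓ‖^2 ≤ (k:ℝ) * ((r:ℝ) * D^2) := by
    rw [hA]
    calc ∑ i, ∑ j', ⟪S σ ℓ, p ℓ j' - p i j'⟫
        ≤ ∑ i, ∑ j', (D^2 - ⟪S σ i, p i j' - p ℓ j'⟫) :=
          Finset.sum_le_sum fun i _ => Finset.sum_le_sum fun j' _ => hterm i j'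
      _ = ∑ i : Fin k, ((r:ℝ)*D^2 - ⟪S σ i, S σ i - S σ ℓ⟫) := by
          refine Finset.sum_congr rfl fun i _ => ?_
          rw [Finset.sum_sub_distrib, Finset.sum_const, Finset.card_univ, Fintype.card_fin,
            ← inner_sum, hsj i ℓ, nsmul_eq_mul]
      _ = (k:ℝ)*((r:ℝ)*D^2) - ((∑ i, ‖S σ i‖^2) - ⟪∑ i, S σ i, S σ ℓ⟫) := by
          rw [Finset.sum_sub_distrib, Finset.sum_const, Finset.card_univ, Fintype.card_fin,
            nsmul_eq_mul, sum_inner]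
          congr 1
          rw [← Finset.sum_sub_distrib]
          refine Finset.sum_congr rfl fun i _ => ?_
          rw [inner_sub_right, real_inner_self_eq_norm_sq, real_inner_comm]
      _ ≤ (k:ℝ)*((r:ℝ)*D^2) := by
          rw [hsum0, inner_zero_left]
          have : 0 ≤ ∑ i, ‖S σ i‖^2 := Finset.sum_nonneg fun i _ => sq_nonneg _
          linarith
  exact le_of_mul_le_mul_left hmain hkR

/-- **Colorful no-dimensional Tverberg theorem** (Adiprasito, Bárány, Mustafa).
For pairwise disjoint sets `Q_1, …, Q_r`, each of size `k`, in a real inner product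
space, there exist a transversal partition `{P_1, …, P_k}` of their union (with
`|P_i ∩ Q_j| = 1` for all `i, j`) and a point `c` such that the closed ball of radius
`((1 + √2)/√r)·max_j diam Q_j` centered at `c` intersects the convex hull of
every part. -/
theorem colorful_no_dimensional_tverberg
    {E : Type*} [NormedAddCommGroup E] [InnerProductSpace ℝ E] [DecidableEq E]
    (k r : ℕ) (hk : 2 ≤ k) (hr : 1 ≤ r)
    (Q : Fin r → Finset E) (hcard : ∀ j, (Q j).card = k)
    (hdisj : ∀ j j', j ≠ j' → Disjoint (Q j) (Q j')) :
    ∃ Pparts : Fin k → Finset E,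
      (∀ i i', i ≠ i' → Disjoint (Pparts i) (Pparts i')) ∧
      Finset.univ.biUnion Pparts = Finset.univ.biUnion Q ∧
      (∀ i j, (Pparts i ∩ Q j).card = 1) ∧
      ∃ c : E, ∀ i, ∃ p ∈ convexHull ℝ (↑(Pparts i) : Set E),
        dist p c ≤ (1 + Real.sqrt 2) / Real.sqrt (r : ℝ)
          * ⨆ j, Metric.diam (↑(Q j) : Set E) := by
  classical
  haveI : Nonempty (Fin r) := ⟨⟨0, hr⟩⟩
  have hk0 : 0 < k := by omega
  have hr0 : (0:ℝ) < (r:ℝ) := by exact_mod_cast hr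
  set D : ℝ := ⨆ j, Metric.diam (↑(Q j) : Set E) with hDdef
  have hbdd : BddAbove (Set.range fun j => Metric.diam (↑(Q j) : Set E)) :=
    Set.Finite.bddAbove (Set.finite_range _)
  have hdiamD : ∀ j, Metric.diam (↑(Q j) : Set E) ≤ D := fun j => le_ciSup hbdd j
  have hDnn : 0 ≤ D := le_trans Metric.diam_nonneg (hdiamD (Classical.arbitrary _))
  set e : (j : Fin r) → {x // x ∈ Q j} ≃ Fin k := fun j => (Q j).equivFinOfCardEq (hcard j)
    with he
  set f : Fin r → Fin k → E := fun j i => ((e j).symm i : E) with hf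
  have hfmem : ∀ j i, f j i ∈ Q j := fun j i => ((e j).symm i).2
  have hfinj : ∀ j, Function.Injective (f j) :=
    fun j a b h => (e j).symm.injective (Subtype.coe_injective h)
  have hfsurj : ∀ j, ∀ x ∈ Q j, ∃ i, f j i = x := by
    intro j x hx
    exact ⟨e j ⟨x, hx⟩, by simp [hf]⟩
  have hDf : ∀ j i i', ‖f j i - f j i'‖ ≤ D := by
    intro j i i'
    rw [← dist_eq_norm]
    exact le_trans (Metric.dist_le_diam_of_mem ((Q j).finite_toSet.isBounded)
      (hfmem j i) (hfmem j i')) (hdiamD j)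
  obtain ⟨σ, hσ⟩ := tverberg_min_aux k r hk0 f D hDf
  set p : Fin k → Fin r → E := fun i j => f j ((σ j) i) with hp
  have hpmem : ∀ i j, p i j ∈ Q j := fun i j => hfmem j _
  have hpinj : ∀ j, Function.Injective fun i => p i j :=
    fun j a b h => (σ j).injective (hfinj j h)
  refine ⟨fun i => Finset.image (fun j => p i j) Finset.univ, ?_, ?_, ?_, ?_⟩
  · -- pairwise disjoint
    intro i i' hii
    rw [Finset.disjoint_left]
    rintro x hx hx'
    simp only [Finset.mem_image, Finset.mem_univ, true_and] at hx hx'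
    obtain ⟨j, rfl⟩ := hx
    obtain ⟨j', hj'⟩ := hx'
    rcases eq_or_ne j' j with rfl | hjj
    · exact hii (hpinj j' hj').symm
    · exact Finset.disjoint_left.mp (hdisj j' j hjj) (hj' ▸ hpmem i' j') (hpmem i j)
  · -- biUnion equality
    ext x
    simp only [Finset.mem_biUnion, Finset.mem_univ, true_and, Finset.mem_image]
    constructor
    · rintro ⟨i, j, rfl⟩
      exact ⟨j, hpmem i j⟩
    · rintro ⟨j, hx⟩
      obtain ⟨i, hi⟩ := hfsurj j x hx
      refine ⟨(σ j).symm i, j, ?_⟩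
      rw [hp]; simp only [Equiv.apply_symm_apply]; exact hi
  · -- transversal cardinality
    intro i j
    have hset : (Finset.image (fun j => p i j) Finset.univ) ∩ Q j = {p i j} := by
      ext x
      simp only [Finset.mem_inter, Finset.mem_image, Finset.mem_univ, true_and,
        Finset.mem_singleton]
      constructor
      · rintro ⟨⟨j', rfl⟩, hxQ⟩
        rcases eq_or_ne j' j with rfl | hjj
        · rfl
        · exact absurd hxQ (Finset.disjoint_left.mp (hdisj j' j hjj) (hpmem i j'))
      · rintro rfl
        exact ⟨⟨j, rfl⟩, hpmem i j⟩
    rw [hset, Finset.card_singleton]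
  · -- the center and the distance bound
    refine ⟨(r:ℝ)⁻¹ • ∑ j, (k:ℝ)⁻¹ • ∑ i, f j i, fun i => ?_⟩
    refine ⟨(r:ℝ)⁻¹ • ∑ j, p i j, ?_, ?_⟩
    · -- convex hull membership: it is the centerMass with equal weights
      have hmem := Finset.centerMass_mem_convexHull (t := (Finset.univ : Finset (Fin r)))
        (w := fun _ => (1:ℝ)) (z := fun j => p i j) (fun j _ => zero_le_one)
        (by simp only [Finset.sum_const, Finset.card_univ, Fintype.card_fin, nsmul_eq_mul,
              mul_one]; exact hr0)
        (fun j _ => Finset.mem_coe.mpr (Finset.mem_image_of_mem _ (Finset.mem_univ j)))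
      have : (Finset.univ : Finset (Fin r)).centerMass (fun _ => (1:ℝ)) (fun j => p i j)
          = (r:ℝ)⁻¹ • ∑ j, p i j := by
        simp [Finset.centerMass]
      rwa [this] at hmem
    · -- distance estimate
      have hσi := hσ i
      set s : E := ∑ j, (f j ((σ j) i) - (k:ℝ)⁻¹ • ∑ i', f j i') with hs
      have hdist : dist ((r:ℝ)⁻¹ • ∑ j, p i j) ((r:ℝ)⁻¹ • ∑ j, (k:ℝ)⁻¹ • ∑ i', f j i')
          = (r:ℝ)⁻¹ * ‖s‖ := by
        rw [dist_eq_norm, ← smul_sub, norm_smul, Real.norm_eq_abs,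
          abs_of_nonneg (by positivity), ← Finset.sum_sub_distrib]
      rw [hdist]
      have hnorm : ‖s‖ ≤ Real.sqrt r * D := by
        have h1 : Real.sqrt (‖s‖^2) ≤ Real.sqrt ((r:ℝ) * D^2) := Real.sqrt_le_sqrt hσi
        rwa [Real.sqrt_sq (norm_nonneg s), Real.sqrt_mul (le_of_lt hr0),
          Real.sqrt_sq hDnn] at h1
      have hsr : 0 < Real.sqrt r := Real.sqrt_pos.mpr hr0
      have hss : Real.sqrt r * Real.sqrt r = (r:ℝ) := Real.mul_self_sqrt (le_of_lt hr0)
      calc (r:ℝ)⁻¹ * ‖s‖ ≤ (r:ℝ)⁻¹ * (Real.sqrt r * D) := by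
            have : (0:ℝ) ≤ (r:ℝ)⁻¹ := by positivity
            exact mul_le_mul_of_nonneg_left hnorm this
        _ = 1 / Real.sqrt r * D := by
            field_simp; linear_combination D * hss
        _ ≤ (1 + Real.sqrt 2) / Real.sqrt (r:ℝ) * D := by
            have h2 : (1:ℝ) ≤ 1 + Real.sqrt 2 := by
              have := Real.sqrt_nonneg 2; linarith
            have h3 : 1 / Real.sqrt (r:ℝ) ≤ (1 + Real.sqrt 2) / Real.sqrt (r:ℝ) := by
              gcongr
            exact mul_le_mul_of_nonneg_right h3 hDnn
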